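/- Let F be a GF(q)-subspace of GF(q^m) of dimension d, let F₁, F₂ be nonzero elements of F with dim(F₁⁻¹F + F₂⁻¹F) = 2d - 1, and let E be a GF(q)-subspace of GF(q^m) of dimension r such that dim⟨(F₁⁻¹F + F₂⁻¹F)E⟩ = (2d - 1)·r. Then dim⟨FE⟩ = d·r and F₁⁻¹⟨FE⟩ ∩ F₂⁻¹⟨FE⟩ = E. -/

import Mathlib

open Module Submodule

section Aux

variable {Fq K : Type} [Field Fq] [Field K] [Algebra Fq K]

/-- Left multiplication by a nonzero element as a linear equivalence. -/
noncomputable def mulLeftEquiv (c : K) (hc : c ≠ 0) : K ≃ₗ[Fq] K :=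
  LinearEquiv.ofLinear (LinearMap.mulLeft Fq c) (LinearMap.mulLeft Fq c⁻¹)
    (by ext x; simp [← mul_assoc, mul_inv_cancel₀ hc])
    (by ext x; simp [← mul_assoc, inv_mul_cancel₀ hc])

lemma mulLeftEquiv_coe (c : K) (hc : c ≠ 0) :
    (mulLeftEquiv (Fq := Fq) c hc : K →ₗ[Fq] K) = LinearMap.mulLeft Fq c := rfl

lemma finrank_map_mulLeft (c : K) (hc : c ≠ 0) (S : Submodule Fq K) :
    finrank Fq ↥(S.map (LinearMap.mulLeft Fq c)) = finrank Fq ↥S := by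
  rw [← mulLeftEquiv_coe (Fq := Fq) c hc]
  exact LinearEquiv.finrank_map_eq _ _

lemma map_mulLeft_mul (c : K) (S T : Submodule Fq K) :
    (S.map (LinearMap.mulLeft Fq c)) * T = (S * T).map (LinearMap.mulLeft Fq c) := by
  apply le_antisymm
  · apply Submodule.mul_le.mpr
    rintro x hx t ht
    obtain ⟨s, hs, rfl⟩ := hx
    exact ⟨s * t, Submodule.mul_mem_mul hs ht, by simp [LinearMap.mulLeft_apply, mul_assoc]⟩
  · rw [Submodule.map_le_iff_le_comap]
    apply Submodule.mul_le.mpr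
    intro s hs t ht
    simp only [Submodule.mem_comap, LinearMap.mulLeft_apply, ← mul_assoc]
    exact Submodule.mul_mem_mul ⟨s, hs, rfl⟩ ht

lemma finrank_mul_le_mul [FiniteDimensional Fq K] (S T : Submodule Fq K) :
    finrank Fq ↥(S * T) ≤ finrank Fq ↥S * finrank Fq ↥T := by
  classical
  set bS := Module.finBasis Fq ↥S
  set bT := Module.finBasis Fq ↥T
  have hS : Submodule.span Fq (Set.range fun i => (bS i : K)) = S := by
    have : (Set.range fun i => (bS i : K)) = S.subtype '' Set.range bS := by
      rw [← Set.range_comp]; rfl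
    rw [this, ← Submodule.map_span, bS.span_eq, Submodule.map_top, Submodule.range_subtype]
  have hT : Submodule.span Fq (Set.range fun i => (bT i : K)) = T := by
    have : (Set.range fun i => (bT i : K)) = T.subtype '' Set.range bT := by
      rw [← Set.range_comp]; rfl
    rw [this, ← Submodule.map_span, bT.span_eq, Submodule.map_top, Submodule.range_subtype]
  have hprod : S * T = Submodule.span Fq
      (Set.range fun p : (Fin (finrank Fq ↥S)) × (Fin (finrank Fq ↥T)) =>
        (bS p.1 : K) * (bT p.2 : K)) := by
    conv_lhs => rw [← hS, ← hT]
    rw [Submodule.span_mul_span]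
    congr 1
    rw [← Set.image2_mul, Set.image2_range]
  calc finrank Fq ↥(S * T) ≤ Fintype.card ((Fin (finrank Fq ↥S)) × (Fin (finrank Fq ↥T))) := by
        rw [hprod]; exact finrank_range_le_card _
    _ = finrank Fq ↥S * finrank Fq ↥T := by simp

end Aux

/-- Let `F` be a `GF(q)`-subspace of `GF(q^m)` of dimension `d`, `F₁, F₂` nonzero
elements of `F` with `dim(F₁⁻¹F + F₂⁻¹F) = 2d - 1`, and `E` a subspace of dimension `r` with
`dim⟨(F₁⁻¹F + F₂⁻¹F)E⟩ = (2d-1)·r`. Then `dim⟨FE⟩ = d·r` and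
`F₁⁻¹⟨FE⟩ ∩ F₂⁻¹⟨FE⟩ = E`. -/
theorem product_space_full_dim_and_intersection
    (q m d r : ℕ) (hm : 0 < m)
    (Fq K : Type) [Field Fq] [Fintype Fq] [Field K] [Algebra Fq K]
    (hq : Fintype.card Fq = q) (hK : Module.finrank Fq K = m)
    (Fsp E : Submodule Fq K)
    (hF : Module.finrank Fq ↥Fsp = d)
    (F₁ F₂ : K) (hF₁ : F₁ ∈ Fsp) (hF₂ : F₂ ∈ Fsp) (h₁ : F₁ ≠ 0) (h₂ : F₂ ≠ 0)
    (h2d1 : Module.finrank Fq ↥(Fsp.map (LinearMap.mulLeft Fq F₁⁻¹) ⊔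
      Fsp.map (LinearMap.mulLeft Fq F₂⁻¹)) = 2 * d - 1)
    (hE : Module.finrank Fq ↥E = r)
    (hprod : Module.finrank Fq ↥((Fsp.map (LinearMap.mulLeft Fq F₁⁻¹) ⊔
      Fsp.map (LinearMap.mulLeft Fq F₂⁻¹)) * E) = (2 * d - 1) * r) :
    Module.finrank Fq ↥(Fsp * E) = d * r ∧
      (Fsp * E).map (LinearMap.mulLeft Fq F₁⁻¹) ⊓
        (Fsp * E).map (LinearMap.mulLeft Fq F₂⁻¹) = E := by
  have hfdK : FiniteDimensional Fq K := FiniteDimensional.of_finrank_pos (by omega)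
  have h₁' : F₁⁻¹ ≠ 0 := inv_ne_zero h₁
  have h₂' : F₂⁻¹ ≠ 0 := inv_ne_zero h₂
  set S₁ := Fsp.map (LinearMap.mulLeft Fq F₁⁻¹) with hS₁
  set S₂ := Fsp.map (LinearMap.mulLeft Fq F₂⁻¹) with hS₂
  set A := S₁ * E with hA
  set B := S₂ * E with hB
  -- d ≥ 1
  have hd : 1 ≤ d := by
    rw [← hF]
    have : Nontrivial ↥Fsp := ⟨⟨⟨F₁, hF₁⟩, 0, by simp [h₁]⟩⟩
    exact Module.finrank_pos
  -- maps commute with products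
  have hmapA : A = (Fsp * E).map (LinearMap.mulLeft Fq F₁⁻¹) := map_mulLeft_mul _ _ _
  have hmapB : B = (Fsp * E).map (LinearMap.mulLeft Fq F₂⁻¹) := map_mulLeft_mul _ _ _
  -- finranks of S₁, S₂
  have hrS₁ : finrank Fq ↥S₁ = d := by rw [hS₁, finrank_map_mulLeft _ h₁', hF]
  have hrS₂ : finrank Fq ↥S₂ = d := by rw [hS₂, finrank_map_mulLeft _ h₂', hF]
  -- dim A ≤ d*r, dim B ≤ d*r
  have hAle : finrank Fq ↥A ≤ d * r := by
    rw [← hrS₁, ← hE]; exact finrank_mul_le_mul _ _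
  have hBle : finrank Fq ↥B ≤ d * r := by
    rw [← hrS₂, ← hE]; exact finrank_mul_le_mul _ _
  -- E ≤ A ⊓ B
  have hone₁ : (1 : K) ∈ S₁ := ⟨F₁, hF₁, by simp [inv_mul_cancel₀ h₁]⟩
  have hone₂ : (1 : K) ∈ S₂ := ⟨F₂, hF₂, by simp [inv_mul_cancel₀ h₂]⟩
  have hEA : E ≤ A := by
    calc E = 1 * E := (Submodule.one_mul E).symm
    _ ≤ A := mul_le_mul' (Submodule.one_le.mpr hone₁) le_rfl
  have hEB : E ≤ B := by
    calc E = 1 * E := (Submodule.one_mul E).symm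
    _ ≤ B := mul_le_mul' (Submodule.one_le.mpr hone₂) le_rfl
  have hEAB : E ≤ A ⊓ B := le_inf hEA hEB
  have hInfge : r ≤ finrank Fq ↥(A ⊓ B) := hE ▸ Submodule.finrank_mono hEAB
  -- sup
  have hsup : A ⊔ B = (S₁ ⊔ S₂) * E := (Submodule.sup_mul S₁ S₂ E).symm
  have hsupr : finrank Fq ↥(A ⊔ B) = (2 * d - 1) * r := by rw [hsup]; exact hprod
  have hdim := Submodule.finrank_sup_add_finrank_inf_eq A B
  rw [hsupr] at hdim
  have harith : (2 * d - 1) * r = 2 * (d * r) - r := by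
    rw [Nat.sub_mul, one_mul]; ring_nf
  rw [harith] at hdim
  have hrle : r ≤ d * r := Nat.le_mul_of_pos_left r hd
  -- conclude dims
  have hAeq : finrank Fq ↥A = d * r := by omega
  have hInfeq : finrank Fq ↥(A ⊓ B) = r := by omega
  constructor
  · rw [← hAeq, hmapA, finrank_map_mulLeft _ h₁']
  · rw [← hmapA, ← hmapB]
    exact (Submodule.eq_of_le_of_finrank_eq hEAB (by rw [hE, hInfeq])).symm
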